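/- arXiv:2008.05103 — 4 statements merged into one kernel-verified Lean document; each statement's English description precedes it below -/
import Mathlib

section
/- If all n tuples of T are i.i.d. d-dimensional discrete random vectors with probability mass function g and distribution function G (G(v) = P(X ≤ v coordinatewise)), and S is a without-replacement sample of size m, then the expected error of the sampling algorithm is at most ((n−m)/n) Σ_{v ∈ V} g(v)(1 − G(v))^m, where V is the support. -/
open MeasureTheory ProbabilityTheory ENNReal

/-- `u` dominates `v`: coordinatewise `≤` with strict inequality in some coordinate. -/
def dominates {d : ℕ} (u v : Fin d → ℝ) : Prop :=
  (∀ i, u i ≤ v i) ∧ ∃ j, u j < v j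

/-- The number of tuples (indexed by `Fin n`) dominated-or-equal by the subsample
with index set `s`. -/
noncomputable def dnCount {d n : ℕ} (X : Fin n → (Fin d → ℝ)) (s : Finset (Fin n)) : ℕ :=
  Nat.card {i : Fin n // ∃ j ∈ s, dominates (X j) (X i) ∨ X j = X i}

lemma dominates_or_eq_iff_le {d : ℕ} (u v : Fin d → ℝ) :
    (dominates u v ∨ u = v) ↔ u ≤ v := by
  constructor
  · rintro (⟨h, -⟩ | rfl)
    · exact h
    · exact le_refl _
  · intro h
    by_cases hs : ∃ j, u j < v j
    · exact Or.inl ⟨h, hs⟩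
    · push_neg at hs
      exact Or.inr (funext fun j => le_antisymm (h j) (hs j))

/-- If the `n` tuples of `T` are i.i.d. discrete random vectors with mass function `g`
(support `V`) and distribution function `G`, and `S` is a uniform without-replacement
sample of size `m`, then the expected error is at most
`((n-m)/n) Σ_{v ∈ V} g(v) (1-G(v))^m`. -/
theorem expected_error_discrete_le
    {Ω : Type*} [MeasureSpace Ω] [IsProbabilityMeasure (ℙ : Measure Ω)]
    {d n m : ℕ} (hmn : m ≤ n) (X : Fin n → Ω → (Fin d → ℝ))
    (p : PMF (Fin d → ℝ)) (g : (Fin d → ℝ) → ℝ) (G : (Fin d → ℝ) → ℝ)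
    (hmeas : ∀ i, Measurable (X i))
    (hindep : iIndepFun X ℙ)
    (hlaw : ∀ i, Measure.map (X i) ℙ = p.toMeasure)
    (hg : ∀ v, g v = (p v).toReal)
    (hG : ∀ v, G v = (p.toMeasure (Set.Iic v)).toReal) :
    ((Finset.powersetCard m (Finset.univ : Finset (Fin n))).card : ℝ)⁻¹ *
      ∑ s ∈ Finset.powersetCard m (Finset.univ : Finset (Fin n)),
        ∫ ω, ((n : ℝ) - (dnCount (fun i => X i ω) s : ℝ)) / n ∂ℙ ≤
      (((n : ℝ) - m) / n) * ∑' v : p.support, g v * (1 - G v) ^ m := by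
  classical
  set G' : (Fin d → ℝ) → ℝ≥0∞ := fun v => p.toMeasure (Set.Iic v) with hG'
  have hG'le : ∀ v, G' v ≤ 1 := fun v => prob_le_one
  set T : ℝ := ∑' v : p.support, g v * (1 - G v) ^ m with hT
  have hpush : ∀ (j : Fin n) (E : Set (Fin d → ℝ)), MeasurableSet E →
      ℙ (X j ⁻¹' E) = p.toMeasure E := by
    intro j E hE
    rw [← hlaw j, Measure.map_apply (hmeas j) hE]
  -- ENNReal version of the tail sum
  set Tn : ℝ≥0∞ := ∑' v : p.support, p v * (1 - G' v) ^ m with hTn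
  have hTn_le_one : Tn ≤ 1 := by
    calc Tn ≤ ∑' v : p.support, p v := by
          refine ENNReal.tsum_le_tsum fun v => ?_
          calc p (v : Fin d → ℝ) * (1 - G' v) ^ m ≤ p (v : Fin d → ℝ) * 1 ^ m := by
                gcongr
                exact tsub_le_self
            _ = p (v : Fin d → ℝ) := by simp
      _ = ∑' v, p v := by
          rw [tsum_subtype]
          refine tsum_congr fun v => ?_
          by_cases hv : v ∈ p.support
          · simp [Set.indicator_of_mem hv]
          · rw [Set.indicator_of_notMem hv, (PMF.apply_eq_zero_iff p v).mpr hv]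
      _ = 1 := p.tsum_coe
  have hTn_ne_top : Tn ≠ ⊤ := (lt_of_le_of_lt hTn_le_one one_lt_top).ne
  have hterm_ne_top : ∀ v : p.support, p (v : Fin d → ℝ) * (1 - G' v) ^ m ≠ ⊤ := by
    intro v
    exact ENNReal.mul_ne_top (PMF.apply_ne_top p _) (pow_ne_top (by
      exact (lt_of_le_of_lt tsub_le_self one_lt_top).ne))
  have hTnT : Tn.toReal = T := by
    rw [hTn, ENNReal.tsum_toReal_eq hterm_ne_top]
    refine tsum_congr fun v => ?_
    rw [ENNReal.toReal_mul, ENNReal.toReal_pow,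
      ENNReal.toReal_sub_of_le (hG'le _) one_ne_top, ENNReal.toReal_one,
      hg, hG]
  -- per-subsample bound
  have key : ∀ s ∈ Finset.powersetCard m (Finset.univ : Finset (Fin n)),
      ∫ ω, ((n : ℝ) - (dnCount (fun i => X i ω) s : ℝ)) / n ∂ℙ ≤ (((n:ℝ) - m)/n) * T := by
    intro s hs
    have hsc : s.card = m := (Finset.mem_powersetCard_univ.mp hs)
    set A : Fin n → Set Ω := fun i => {ω | ∀ j ∈ s, ¬ X j ω ≤ X i ω} with hA
    have hle_meas : ∀ j i : Fin n, MeasurableSet {ω | X j ω ≤ X i ω} := by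
      intro j i
      have : {ω | X j ω ≤ X i ω} = ⋂ k, {ω | X j ω k ≤ X i ω k} := by
        ext ω; simp [Pi.le_def, Set.mem_iInter]
      rw [this]
      exact MeasurableSet.iInter fun k =>
        measurableSet_le ((measurable_pi_apply k).comp (hmeas j))
          ((measurable_pi_apply k).comp (hmeas i))
    have hAmeas : ∀ i, MeasurableSet (A i) := by
      intro i
      have : A i = ⋂ j ∈ s, {ω | X j ω ≤ X i ω}ᶜ := by
        ext ω; simp [hA, Set.mem_iInter]
      rw [this]
      exact MeasurableSet.biInter s.countable_toSet fun j _ => (hle_meas j i).compl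
    -- pointwise identity
    have hpt : ∀ ω : Ω, ((n : ℝ) - (dnCount (fun i => X i ω) s : ℝ)) / n
        = (n:ℝ)⁻¹ * ∑ i ∈ sᶜ, (A i).indicator (fun _ => (1:ℝ)) ω := by
      intro ω
      have hdn : dnCount (fun i => X i ω) s
          = (Finset.univ.filter (fun i => ∃ j ∈ s, X j ω ≤ X i ω)).card := by
        rw [dnCount, Nat.card_eq_fintype_card, Fintype.card_subtype]
        congr 1
        refine Finset.filter_congr fun i _ => ?_
        constructor
        · rintro ⟨j, hj, h⟩; exact ⟨j, hj, (dominates_or_eq_iff_le _ _).mp h⟩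
        · rintro ⟨j, hj, h⟩; exact ⟨j, hj, (dominates_or_eq_iff_le _ _).mpr h⟩
      have hsplit : (Finset.univ.filter (fun i => ∃ j ∈ s, X j ω ≤ X i ω)).card
          + (Finset.univ.filter (fun i => ¬ ∃ j ∈ s, X j ω ≤ X i ω)).card = n := by
        rw [Finset.card_filter_add_card_filter_not]
        simp
      have hfilter_eq : (Finset.univ.filter (fun i => ¬ ∃ j ∈ s, X j ω ≤ X i ω))
          = sᶜ.filter (fun i => ¬ ∃ j ∈ s, X j ω ≤ X i ω) := by
        ext i
        simp only [Finset.mem_filter, Finset.mem_univ, true_and, Finset.mem_compl]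
        constructor
        · intro h
          refine ⟨fun hi => h ⟨i, hi, le_refl _⟩, h⟩
        · rintro ⟨-, h⟩; exact h
      have hcard_sum : ((Finset.univ.filter (fun i => ¬ ∃ j ∈ s, X j ω ≤ X i ω)).card : ℝ)
          = ∑ i ∈ sᶜ, (A i).indicator (fun _ => (1:ℝ)) ω := by
        rw [hfilter_eq, Finset.card_filter, Nat.cast_sum]
        refine Finset.sum_congr rfl fun i _ => ?_
        by_cases hAi : ω ∈ A i
        · have : ¬ ∃ j ∈ s, X j ω ≤ X i ω := by
            rintro ⟨j, hj, h⟩; exact hAi j hj h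
          rw [if_pos this, Set.indicator_of_mem hAi]; norm_num
        · have : ∃ j ∈ s, X j ω ≤ X i ω := by
            by_contra h
            push_neg at h
            exact hAi h
          rw [if_neg (by exact fun hcon => hcon this), Set.indicator_of_notMem hAi]
          norm_num
      rw [hdn, div_eq_inv_mul, ← hcard_sum]
      congr 1
      have := hsplit
      have : ((Finset.univ.filter (fun i => ∃ j ∈ s, X j ω ≤ X i ω)).card : ℝ)
          + ((Finset.univ.filter (fun i => ¬ ∃ j ∈ s, X j ω ≤ X i ω)).card : ℝ) = n := by
        exact_mod_cast congrArg (Nat.cast : ℕ → ℝ) hsplit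
      linarith
    -- probability of non-coverage events
    have hAbound : ∀ i, i ∉ s → (ℙ (A i)).toReal ≤ T := by
      intro i hi
      have hB : ∀ v : (Fin d → ℝ),
          ℙ (X i ⁻¹' {v} ∩ ⋂ j ∈ s, X j ⁻¹' (Set.Iic v)ᶜ) = p v * (1 - G' v) ^ m := by
        intro v
        set sets : Fin n → Set (Fin d → ℝ) :=
          fun j => if j = i then {v} else (Set.Iic v)ᶜ with hsets_def
        have hsets : ∀ k ∈ insert i s, MeasurableSet (sets k) := by
          intro k _
          rw [hsets_def]
          dsimp only
          split
          · exact measurableSet_singleton v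
          · exact measurableSet_Iic.compl
        have hmain := (iIndepFun_iff_measure_inter_preimage_eq_mul.mp hindep)
          (insert i s) hsets
        have hL : (⋂ k ∈ (insert i s : Finset (Fin n)), X k ⁻¹' sets k)
            = X i ⁻¹' {v} ∩ ⋂ j ∈ s, X j ⁻¹' (Set.Iic v)ᶜ := by
          rw [Finset.set_biInter_insert]
          congr 1
          · rw [hsets_def]; simp
          · refine Set.iInter₂_congr fun j hj => ?_
            rw [hsets_def]
            simp only [if_neg (ne_of_mem_of_not_mem hj hi)]
        have hR : (∏ k ∈ (insert i s : Finset (Fin n)), ℙ (X k ⁻¹' sets k))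
            = p v * (1 - G' v) ^ m := by
          rw [Finset.prod_insert hi]
          have h1 : ℙ (X i ⁻¹' sets i) = p v := by
            have hsi : sets i = {v} := by simp [hsets_def]
            rw [hsi, hpush i _ (measurableSet_singleton v),
              PMF.toMeasure_apply_singleton _ _ (measurableSet_singleton v)]
          have h2 : ∀ j ∈ s, ℙ (X j ⁻¹' sets j) = 1 - G' v := by
            intro j hj
            have hsj : sets j = (Set.Iic v)ᶜ := by
              simp [hsets_def, ne_of_mem_of_not_mem hj hi]
            rw [hsj, hpush j _ measurableSet_Iic.compl,
              measure_compl measurableSet_Iic (measure_ne_top _ _), measure_univ]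
          rw [h1, Finset.prod_congr rfl h2, Finset.prod_const, hsc]
        rw [← hL, hmain, hR]
      -- covering
      have hcover : A i ⊆ (⋃ v : p.support,
          (X i ⁻¹' {(v : Fin d → ℝ)} ∩ ⋂ j ∈ s, X j ⁻¹' (Set.Iic (v : Fin d → ℝ))ᶜ))
          ∪ X i ⁻¹' (p.support)ᶜ := by
        intro ω hω
        by_cases hv : X i ω ∈ p.support
        · left
          refine Set.mem_iUnion.mpr ⟨⟨X i ω, hv⟩, rfl, ?_⟩
          simp only [Set.mem_iInter, Set.mem_preimage, Set.mem_compl_iff, Set.mem_Iic]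
          intro j hj
          exact hω j hj
        · right; exact hv
      have hnull : ℙ (X i ⁻¹' (p.support)ᶜ) = 0 := by
        rw [hpush i _ (p.support_countable.measurableSet.compl)]
        rw [PMF.toMeasure_apply _ (p.support_countable.measurableSet.compl)]
        have : ∀ x, (p.support)ᶜ.indicator (⇑p) x = 0 := by
          intro x
          by_cases hx : x ∈ p.support
          · exact Set.indicator_of_notMem (by simpa using hx) _
          · rw [Set.indicator_of_mem (by simpa using hx) (⇑p),
              (PMF.apply_eq_zero_iff p x).mpr hx]
        simp [this]
      have hle : ℙ (A i) ≤ Tn := by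
        calc ℙ (A i) ≤ ℙ ((⋃ v : p.support,
              (X i ⁻¹' {(v : Fin d → ℝ)} ∩ ⋂ j ∈ s, X j ⁻¹' (Set.Iic (v : Fin d → ℝ))ᶜ))
              ∪ X i ⁻¹' (p.support)ᶜ) := measure_mono hcover
          _ ≤ ℙ (⋃ v : p.support,
              (X i ⁻¹' {(v : Fin d → ℝ)} ∩ ⋂ j ∈ s, X j ⁻¹' (Set.Iic (v : Fin d → ℝ))ᶜ))
              + ℙ (X i ⁻¹' (p.support)ᶜ) := measure_union_le _ _
          _ = ℙ (⋃ v : p.support,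
              (X i ⁻¹' {(v : Fin d → ℝ)} ∩ ⋂ j ∈ s, X j ⁻¹' (Set.Iic (v : Fin d → ℝ))ᶜ)) := by
              rw [hnull, add_zero]
          _ ≤ ∑' v : p.support, ℙ (X i ⁻¹' {(v : Fin d → ℝ)}
              ∩ ⋂ j ∈ s, X j ⁻¹' (Set.Iic (v : Fin d → ℝ))ᶜ) := by
              have : Countable p.support := p.support_countable.to_subtype
              exact measure_iUnion_le _
          _ = Tn := by
              rw [hTn]
              exact tsum_congr fun v => hB _
      calc (ℙ (A i)).toReal ≤ Tn.toReal :=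
            ENNReal.toReal_mono hTn_ne_top hle
        _ = T := hTnT
    -- put it together
    calc ∫ ω, ((n : ℝ) - (dnCount (fun i => X i ω) s : ℝ)) / n ∂ℙ
        = (n:ℝ)⁻¹ * ∑ i ∈ sᶜ, (ℙ (A i)).toReal := by
          simp_rw [hpt]
          rw [integral_const_mul]
          congr 1
          rw [integral_finset_sum _ (fun i _ => (integrable_const (1:ℝ)).indicator (hAmeas i))]
          refine Finset.sum_congr rfl fun i _ => ?_
          rw [integral_indicator_const (1:ℝ) (hAmeas i)]
          simp [Measure.real]
      _ ≤ (n:ℝ)⁻¹ * ((sᶜ.card : ℝ) * T) := by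
          refine mul_le_mul_of_nonneg_left ?_ (by positivity)
          calc ∑ i ∈ sᶜ, (ℙ (A i)).toReal ≤ ∑ _i ∈ sᶜ, T :=
                Finset.sum_le_sum fun i hi => hAbound i (Finset.mem_compl.mp hi)
              _ = (sᶜ.card : ℝ) * T := by rw [Finset.sum_const, nsmul_eq_mul]
      _ = (((n:ℝ) - m)/n) * T := by
          have : (sᶜ.card : ℝ) = (n:ℝ) - m := by
            rw [Finset.card_compl, hsc, Fintype.card_fin, Nat.cast_sub hmn]
          rw [this]
          ring
  -- averaging
  have hcard : (0:ℝ) < ((Finset.powersetCard m (Finset.univ : Finset (Fin n))).card : ℝ) := by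
    rw [Finset.card_powersetCard, Finset.card_univ, Fintype.card_fin]
    exact_mod_cast Nat.choose_pos hmn
  calc ((Finset.powersetCard m (Finset.univ : Finset (Fin n))).card : ℝ)⁻¹ *
      ∑ s ∈ Finset.powersetCard m (Finset.univ : Finset (Fin n)),
        ∫ ω, ((n : ℝ) - (dnCount (fun i => X i ω) s : ℝ)) / n ∂ℙ
      ≤ ((Finset.powersetCard m (Finset.univ : Finset (Fin n))).card : ℝ)⁻¹ *
        (((Finset.powersetCard m (Finset.univ : Finset (Fin n))).card : ℝ) *
          ((((n:ℝ) - m)/n) * T)) := by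
        refine mul_le_mul_of_nonneg_left ?_ (by positivity)
        calc ∑ s ∈ Finset.powersetCard m (Finset.univ : Finset (Fin n)),
              ∫ ω, ((n : ℝ) - (dnCount (fun i => X i ω) s : ℝ)) / n ∂ℙ
              ≤ ∑ _s ∈ Finset.powersetCard m (Finset.univ : Finset (Fin n)),
                (((n:ℝ) - m)/n) * T := Finset.sum_le_sum key
            _ = ((Finset.powersetCard m (Finset.univ : Finset (Fin n))).card : ℝ) *
                ((((n:ℝ) - m)/n) * T) := by rw [Finset.sum_const, nsmul_eq_mul]
    _ = (((n:ℝ) - m)/n) * T := by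
        rw [← mul_assoc, inv_mul_cancel₀ hcard.ne', one_mul]
end

section
/- The generalized harmonic number H_{d,n} defined by H_{0,n} = 1 for all n ≥ 1 and H_{d,n} = Σ_{i=1}^{n} H_{d−1,i}/i satisfies H_{d,n} ≤ Σ_{i=0}^{d} (log n)^i / i! for all d ≥ 0 and n ≥ 1. -/
/-- The `d`-th order harmonic numbers: `H 0 n = 1`, `H (d+1) n = Σ_{i=1}^n H d i / i`. -/
noncomputable def H : ℕ → ℕ → ℝ
  | 0, _ => 1
  | d + 1, n => ∑ i ∈ Finset.Icc 1 n, H d i / i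

noncomputable def F (d : ℕ) (x : ℝ) : ℝ :=
  ∑ j ∈ Finset.range (d + 1), (Real.log x) ^ j / (Nat.factorial j)

lemma F_one (d : ℕ) : F d 1 = 1 := by
  unfold F
  rw [Finset.sum_eq_single 0]
  · simp
  · intro j _ hj
    simp [Real.log_one, zero_pow hj]
  · simp

lemma hasDerivAt_F (d : ℕ) {x : ℝ} (hx : 0 < x) :
    HasDerivAt (F d) ((F d x - (Real.log x) ^ d / (Nat.factorial d)) / x) x := by
  have h : ∀ j : ℕ, HasDerivAt (fun y : ℝ => (Real.log y) ^ j / (Nat.factorial j))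
      ((j : ℝ) * (Real.log x) ^ (j - 1) * x⁻¹ / (Nat.factorial j)) x := fun j =>
    ((Real.hasDerivAt_log hx.ne').pow j).div_const _
  have hsum := HasDerivAt.fun_sum (fun j (_ : j ∈ Finset.range (d + 1)) => h j)
  refine hsum.congr_deriv (Eq.symm ?_)
  rw [Finset.sum_range_succ' (fun j => (j : ℝ) * (Real.log x) ^ (j - 1) * x⁻¹ /
    (Nat.factorial j))]
  have hF : F d x - (Real.log x) ^ d / (Nat.factorial d)
      = ∑ j ∈ Finset.range d, (Real.log x) ^ j / (Nat.factorial j) := by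
    unfold F; rw [Finset.sum_range_succ]; ring
  rw [hF, Finset.sum_div]
  simp only [Nat.cast_zero, zero_mul, Nat.factorial_zero, Nat.cast_one, zero_div, add_zero]
  refine Finset.sum_congr rfl fun k _ => ?_
  have hfac : ((k + 1).factorial : ℝ) = (k + 1) * (k.factorial : ℝ) := by
    rw [Nat.factorial_succ]; push_cast; ring
  have hfk : (k.factorial : ℝ) ≠ 0 := Nat.cast_ne_zero.2 k.factorial_ne_zero
  have hk1 : ((k : ℝ) + 1) ≠ 0 := by positivity
  simp only [Nat.add_sub_cancel, hfac]
  push_cast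
  field_simp

lemma hasDerivAt_F_succ (d : ℕ) {x : ℝ} (hx : 0 < x) :
    HasDerivAt (F (d + 1)) (F d x / x) x := by
  have := hasDerivAt_F (d + 1) hx
  have hF : F (d + 1) x - (Real.log x) ^ (d + 1) / (Nat.factorial (d + 1)) = F d x := by
    unfold F; rw [Finset.sum_range_succ]; ring
  rwa [hF] at this

lemma hasDerivAt_g (d : ℕ) {x : ℝ} (hx : 0 < x) :
    HasDerivAt (fun y => F d y / y) (-(Real.log x) ^ d / (Nat.factorial d * x ^ 2)) x := by
  have h := (hasDerivAt_F d hx).div (hasDerivAt_id x) hx.ne'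
  refine h.congr_deriv (Eq.symm ?_)
  simp only [id]
  field_simp
  ring

lemma g_antitone (d : ℕ) : AntitoneOn (fun y => F d y / y) (Set.Ici (1 : ℝ)) := by
  apply antitoneOn_of_hasDerivWithinAt_nonpos (convex_Ici 1)
    (f' := fun x => -(Real.log x) ^ d / (Nat.factorial d * x ^ 2))
  · intro x hx
    have hx1 : (1 : ℝ) ≤ x := hx
    exact (hasDerivAt_g d (lt_of_lt_of_le one_pos hx1)).continuousAt.continuousWithinAt
  · intro x hx
    rw [interior_Ici] at hx
    exact (hasDerivAt_g d (lt_trans one_pos hx)).hasDerivWithinAt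
  · intro x hx
    rw [interior_Ici] at hx
    have hlog : 0 ≤ Real.log x := Real.log_nonneg hx.le
    have h1 : 0 ≤ (Real.log x) ^ d := pow_nonneg hlog d
    have hx0 : (0:ℝ) < x := lt_trans one_pos hx
    have h2 : 0 < (Nat.factorial d : ℝ) * x ^ 2 := by positivity
    exact div_nonpos_of_nonpos_of_nonneg (neg_nonpos.2 h1) h2.le

/-- `H_{d,n} ≤ Σ_{i=0}^{d} (log n)^i / i!` for all `d ≥ 0`, `n ≥ 1`. -/
theorem harmonic_le_log_sum (d n : ℕ) (hn : 1 ≤ n) :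
    H d n ≤ ∑ i ∈ Finset.range (d + 1), (Real.log n) ^ i / (Nat.factorial i) := by
  have key : ∀ d n : ℕ, 1 ≤ n → H d n ≤ F d n := by
    intro d
    induction d with
    | zero => intro n hn; simp [H, F]
    | succ d ih =>
      intro n hn
      have hn1 : (1 : ℝ) ≤ (n : ℝ) := by exact_mod_cast hn
      set g : ℝ → ℝ := fun y => F d y / y with hg
      have step1 : H (d + 1) n ≤ ∑ i ∈ Finset.Icc 1 n, g i := by
        show (∑ i ∈ Finset.Icc 1 n, H d i / i) ≤ _
        apply Finset.sum_le_sum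
        intro i hi
        have hi1 : 1 ≤ i := (Finset.mem_Icc.1 hi).1
        have hip : (0 : ℝ) < i := by exact_mod_cast hi1
        exact div_le_div_of_nonneg_right (ih i hi1) hip.le
      -- split off i = 1
      have hsplit : ∑ i ∈ Finset.Icc 1 n, g i
          = g 1 + ∑ i ∈ Finset.Ico 1 n, g (↑(i + 1)) := by
        have h1 : ∑ i ∈ Finset.Ico 1 n, g (↑(i + 1)) = ∑ i ∈ Finset.Icc 2 n, g i := by
          rw [Finset.sum_Ico_add' (fun i : ℕ => g i) 1 n 1, Finset.Ico_add_one_right_eq_Icc]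
        rw [h1]
        have h2 : Finset.Icc 1 n = insert 1 (Finset.Icc 2 n) := by
          ext x
          simp only [Finset.mem_Icc, Finset.mem_insert]
          omega
        rw [h2, Finset.sum_insert (by simp)]
        norm_num
      have hanti : AntitoneOn g (Set.Icc (1 : ℝ) ((1 : ℕ) : ℝ) ∪ Set.Icc ((1:ℕ):ℝ) n) :=
        (g_antitone d).mono (by
          intro x hx
          rcases hx with h | h
          · exact h.1
          · simp only [Nat.cast_one] at h; exact h.1)
      have hanti' : AntitoneOn g (Set.Icc ((1 : ℕ) : ℝ) ((n : ℕ) : ℝ)) :=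
        (g_antitone d).mono (fun x hx => by simpa using hx.1)
      have hint : (∑ i ∈ Finset.Ico 1 n, g (↑(i + 1))) ≤ ∫ x in (1 : ℕ)..(n : ℕ), g x :=
        AntitoneOn.sum_le_integral_Ico hn hanti'
      have hftc : (∫ x in (1 : ℕ)..(n : ℕ), g x) = F (d + 1) n - F (d + 1) 1 := by
        push_cast
        apply intervalIntegral.integral_eq_sub_of_hasDerivAt
        · intro x hx
          rw [Set.uIcc_of_le hn1] at hx
          exact hasDerivAt_F_succ d (lt_of_lt_of_le one_pos hx.1)
        · apply ContinuousOn.intervalIntegrable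
          intro x hx
          rw [Set.uIcc_of_le hn1] at hx
          exact (hasDerivAt_g d (lt_of_lt_of_le one_pos hx.1)).continuousAt.continuousWithinAt
      have hg1 : g 1 = 1 := by simp [hg, F_one]
      calc H (d + 1) n ≤ ∑ i ∈ Finset.Icc 1 n, g i := step1
        _ = g 1 + ∑ i ∈ Finset.Ico 1 n, g (↑(i + 1)) := hsplit
        _ ≤ g 1 + (F (d + 1) n - F (d + 1) 1) := by rw [← hftc]; linarith [hint]
        _ = F (d + 1) n := by rw [hg1, F_one]; ring
  exact key d n hn
end

section
/- Under component independence (independent coordinates, all coordinate values distinct), if T has n tuples and the sample size is m, the expected error of the sampling-based skyline algorithm equals ((n−m)/(n(m+1))) H_{d−1,m+1}, which is at most ((n−m)/(n(m+1))) Σ_{i=0}^{d−1} (log(m+1))^i / i!. -/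
open MeasureTheory ProbabilityTheory

section Scal
open Finset

/-- Auxiliary alternating sum. -/
noncomputable def A (e N : ℕ) : ℝ := ∑ k ∈ Icc 1 N, (-1 : ℝ) ^ (k + 1) * (N.choose k) / (k : ℝ) ^ e

lemma range_succ_eq_insert (N : ℕ) : range (N + 1) = insert 0 (Icc 1 N) := by
  ext k; simp [Nat.lt_succ_iff]; omega

lemma A_zero {N : ℕ} (hN : 1 ≤ N) : A 0 N = 1 := by
  have h := Int.alternating_sum_range_choose_of_ne (n := N) (by omega)
  have h' : (∑ k ∈ range (N + 1), (-1 : ℝ) ^ k * (N.choose k)) = 0 := by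
    have := congrArg (fun z : ℤ => (z : ℝ)) h
    push_cast at this
    simpa using this
  rw [range_succ_eq_insert] at h'
  rw [Finset.sum_insert (by simp)] at h'
  simp only [pow_zero, one_mul, Nat.choose_zero_right, Nat.cast_one] at h'
  unfold A
  have : ∑ k ∈ Icc 1 N, (-1 : ℝ) ^ (k + 1) * (N.choose k) / (k : ℝ) ^ 0 =
      -∑ k ∈ Icc 1 N, (-1 : ℝ) ^ k * (N.choose k) := by
    rw [← Finset.sum_neg_distrib]
    refine Finset.sum_congr rfl fun k _ => ?_
    rw [pow_zero, div_one, pow_succ]; ring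
  rw [this]; linarith

lemma bridge (e M : ℕ) :
    ∑ k ∈ range (M + 1), (-1 : ℝ) ^ k * (M.choose k) / ((k : ℝ) + 1) ^ (e + 1) =
      A e (M + 1) / (M + 1) := by
  unfold A
  rw [Finset.sum_div]
  rw [show Icc 1 (M + 1) = Finset.image (fun j => j + 1) (range (M + 1)) by
    ext k
    simp only [mem_Icc, mem_image, mem_range]
    constructor
    · rintro ⟨h1, h2⟩; exact ⟨k - 1, by omega, by omega⟩
    · rintro ⟨j, hj, rfl⟩; omega]
  rw [Finset.sum_image (by intro a _ b _ h; simp only at h; omega)]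
  refine Finset.sum_congr rfl fun j _ => ?_
  have hchoose : ((M + 1).choose (j + 1) : ℝ) * ((j : ℝ) + 1) = ((M : ℝ) + 1) * (M.choose j) := by
    exact_mod_cast (Nat.add_one_mul_choose_eq M j).symm
  have hsign : (-1 : ℝ) ^ (j + 1 + 1) = (-1 : ℝ) ^ j := by
    rw [pow_succ, pow_succ]; ring
  push_cast
  rw [hsign, div_div, div_eq_div_iff (by positivity) (by positivity), pow_succ]
  linear_combination ((-1 : ℝ) * (-1 : ℝ) ^ j * ((j : ℝ) + 1) ^ e) * hchoose

lemma A_succ_sub (e M : ℕ) : A (e + 1) (M + 1) - A (e + 1) M = A e (M + 1) / (M + 1) := by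
  rw [← bridge e M]
  unfold A
  have hsplit : ∀ k ∈ Icc 1 (M + 1),
      (-1 : ℝ) ^ (k + 1) * ((M + 1).choose k) / (k : ℝ) ^ (e + 1) =
        (-1 : ℝ) ^ (k + 1) * (M.choose k) / (k : ℝ) ^ (e + 1) +
          (-1 : ℝ) ^ (k + 1) * (M.choose (k - 1)) / (k : ℝ) ^ (e + 1) := by
    intro k hk
    rw [mem_Icc] at hk
    obtain ⟨j, rfl⟩ : ∃ j, k = j + 1 := ⟨k - 1, by omega⟩
    have : (M + 1).choose (j + 1) = M.choose j + M.choose (j + 1) := Nat.choose_succ_succ M j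
    rw [this]
    push_cast
    ring_nf
  rw [Finset.sum_congr rfl hsplit, Finset.sum_add_distrib]
  have h1 : ∑ k ∈ Icc 1 (M + 1), (-1 : ℝ) ^ (k + 1) * (M.choose k) / (k : ℝ) ^ (e + 1) =
      ∑ k ∈ Icc 1 M, (-1 : ℝ) ^ (k + 1) * (M.choose k) / (k : ℝ) ^ (e + 1) := by
    rw [Finset.sum_Icc_succ_top (by omega)]
    simp [Nat.choose_succ_self]
  have h2 : ∑ k ∈ Icc 1 (M + 1), (-1 : ℝ) ^ (k + 1) * (M.choose (k - 1)) / (k : ℝ) ^ (e + 1) =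
      ∑ k ∈ range (M + 1), (-1 : ℝ) ^ k * (M.choose k) / ((k : ℝ) + 1) ^ (e + 1) := by
    rw [show Icc 1 (M + 1) = Finset.image (fun j => j + 1) (range (M + 1)) by
      ext k
      simp only [mem_Icc, mem_image, mem_range]
      constructor
      · rintro ⟨ha, hb⟩; exact ⟨k - 1, by omega, by omega⟩
      · rintro ⟨j, hj, rfl⟩; omega]
    rw [Finset.sum_image (by intro a _ b _ h; simp only at h; omega)]
    refine Finset.sum_congr rfl fun j _ => ?_
    have hsign : (-1 : ℝ) ^ (j + 1 + 1) = (-1 : ℝ) ^ j := by rw [pow_succ, pow_succ]; ring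
    simp only [Nat.add_sub_cancel, hsign]
    push_cast
    ring_nf
  rw [h1, h2]
  ring

lemma A_eq_H : ∀ e N, 1 ≤ N → A e N = H e N := by
  intro e
  induction e with
  | zero => intro N hN; rw [A_zero hN]; rfl
  | succ e ih =>
    intro N _
    have htel : ∀ M, A (e + 1) M = ∑ i ∈ range M, A e (i + 1) / ((i : ℝ) + 1) := by
      intro M
      induction M with
      | zero => simp [A]
      | succ M ihM =>
        rw [Finset.sum_range_succ, ← ihM]
        have := A_succ_sub e M
        push_cast
        linarith
    rw [htel N]
    show _ = ∑ i ∈ Icc 1 N, H e i / i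
    rw [show Icc 1 N = Finset.image (fun j => j + 1) (range N) by
      ext k
      simp only [mem_Icc, mem_image, mem_range]
      constructor
      · rintro ⟨ha, hb⟩; exact ⟨k - 1, by omega, by omega⟩
      · rintro ⟨j, hj, rfl⟩; omega]
    rw [Finset.sum_image (by intro a _ b _ h; simp only at h; omega)]
    refine Finset.sum_congr rfl fun j _ => ?_
    rw [ih (j + 1) (by omega)]
    push_cast
    ring

/-- The key scalar identity. -/
lemma sum_alt_eq_H {d m : ℕ} (hd : 1 ≤ d) :
    ∑ k ∈ range (m + 1), (-1 : ℝ) ^ k * (m.choose k) / ((k : ℝ) + 1) ^ d =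
      H (d - 1) (m + 1) / ((m : ℝ) + 1) := by
  obtain ⟨e, rfl⟩ : ∃ e, d = e + 1 := ⟨d - 1, by omega⟩
  rw [bridge e m, A_eq_H e (m + 1) (by omega)]
  simp

end Scal


section Ineq
open Finset Real Set

/-- The bounding function. -/
noncomputable def fb (e : ℕ) (x : ℝ) : ℝ := ∑ j ∈ range (e + 1), (Real.log x) ^ j / (j.factorial)

lemma fb_one (e : ℕ) : fb e 1 = 1 := by
  unfold fb
  rw [Finset.sum_eq_single 0]
  · simp
  · intro j _ hj
    obtain ⟨i, rfl⟩ : ∃ i, j = i + 1 := ⟨j - 1, by omega⟩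
    simp [Real.log_one]
  · simp

lemma hasDerivAt_fb (e : ℕ) {x : ℝ} (hx : 0 < x) :
    HasDerivAt (fb e) ((fb e x - (Real.log x) ^ e / e.factorial) / x) x := by
  have key : ∀ j : ℕ, HasDerivAt (fun y => (Real.log y) ^ j / (j.factorial : ℝ))
      ((j : ℝ) * (Real.log x) ^ (j - 1) * x⁻¹ / (j.factorial : ℝ)) x := by
    intro j
    exact ((Real.hasDerivAt_log hx.ne').pow j).div_const _
  have hsum : HasDerivAt (fb e)
      (∑ j ∈ range (e + 1), (j : ℝ) * (Real.log x) ^ (j - 1) * x⁻¹ / (j.factorial : ℝ)) x :=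
    HasDerivAt.fun_sum fun j _ => key j
  convert hsum using 1
  rw [div_eq_iff hx.ne', Finset.sum_mul]
  have hcl : ∑ j ∈ range (e + 1), (j : ℝ) * (Real.log x) ^ (j - 1) * x⁻¹ / (j.factorial : ℝ) * x =
      ∑ j ∈ range (e + 1), (j : ℝ) * (Real.log x) ^ (j - 1) / (j.factorial : ℝ) :=
    Finset.sum_congr rfl (fun j _ => by field_simp)
  rw [hcl]
  have hstrip : ∑ j ∈ range (e + 1), (j : ℝ) * (Real.log x) ^ (j - 1) / (j.factorial : ℝ) =
      ∑ j ∈ range e, (Real.log x) ^ j / (j.factorial : ℝ) := by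
    rw [Finset.sum_range_succ']
    simp only [Nat.cast_zero, zero_mul, Nat.factorial_zero, Nat.cast_one, zero_div, add_zero]
    refine Finset.sum_congr rfl fun j _ => ?_
    simp only [Nat.add_sub_cancel, Nat.factorial_succ]
    push_cast
    have h1 : (j.factorial : ℝ) ≠ 0 := Nat.cast_ne_zero.2 j.factorial_ne_zero
    field_simp
  rw [hstrip]; symm
  unfold fb
  rw [Finset.sum_range_succ]
  ring

lemma fb_nonneg (e : ℕ) {x : ℝ} (hx : 1 ≤ x) : 0 ≤ fb e x := by
  unfold fb
  refine Finset.sum_nonneg fun j _ => ?_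
  have := Real.log_nonneg hx
  positivity

lemma antitoneOn_g (e : ℕ) : AntitoneOn (fun x => fb e x / x) (Ici (1 : ℝ)) := by
  have hder : ∀ x ∈ interior (Ici (1 : ℝ)),
      HasDerivAt (fun x => fb e x / x) (-((Real.log x) ^ e / e.factorial) / x ^ 2) x := by
    intro x hx
    rw [interior_Ici] at hx
    have hx0 : (0 : ℝ) < x := lt_trans one_pos hx
    have h : HasDerivAt (fun x => fb e x / x) _ x := (hasDerivAt_fb e hx0).div (hasDerivAt_id x) hx0.ne'
    convert h using 1
    field_simp
    ring
  have hcont : ContinuousOn (fun x => fb e x / x) (Ici (1 : ℝ)) := by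
    intro x hx
    have hx0 : (0 : ℝ) < x := lt_of_lt_of_le one_pos hx
    exact (((hasDerivAt_fb e hx0).continuousAt).div continuousAt_id hx0.ne').continuousWithinAt
  refine antitoneOn_of_deriv_nonpos (convex_Ici 1) hcont ?_ ?_
  · intro x hx
    exact (hder x hx).differentiableAt.differentiableWithinAt
  · intro x hx
    rw [(hder x hx).deriv]
    rw [interior_Ici] at hx
    have hlog : 0 ≤ Real.log x := Real.log_nonneg (le_of_lt hx)
    have h1 : (0 : ℝ) ≤ (Real.log x) ^ e / e.factorial := by positivity
    have hx0 : (0 : ℝ) < x := lt_trans one_pos hx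
    have h2 : (0 : ℝ) < x ^ 2 := by positivity
    exact div_nonpos_of_nonpos_of_nonneg (neg_nonpos.2 h1) h2.le

lemma fb_step (e : ℕ) {a : ℝ} (ha : 1 ≤ a) :
    fb e (a + 1) / (a + 1) ≤ fb (e + 1) (a + 1) - fb (e + 1) a := by
  have hab : a < a + 1 := by linarith
  have hder : ∀ x ∈ Ioo a (a + 1), HasDerivAt (fb (e + 1)) (fb e x / x) x := by
    intro x hx
    have hx0 : (0 : ℝ) < x := by cases hx; linarith
    have h := hasDerivAt_fb (e + 1) hx0
    have : (fb (e + 1) x - (Real.log x) ^ (e + 1) / (e + 1).factorial) = fb e x := by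
      unfold fb
      rw [Finset.sum_range_succ]
      ring
    rwa [this] at h
  have hcont : ContinuousOn (fb (e + 1)) (Icc a (a + 1)) := by
    intro x hx
    have hx0 : (0 : ℝ) < x := by cases hx; linarith
    exact (hasDerivAt_fb (e + 1) hx0).continuousAt.continuousWithinAt
  obtain ⟨c, hc, hceq⟩ := exists_hasDerivAt_eq_slope (fb (e + 1)) (fun x => fb e x / x) hab
    hcont hder
  have hc1 : (1 : ℝ) ≤ c := by cases hc; linarith
  have hmono := antitoneOn_g e (Set.mem_Ici.2 hc1)
    (Set.mem_Ici.2 (show (1:ℝ) ≤ a + 1 by linarith)) (by cases hc; linarith)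
  simp only at hmono
  rw [hceq] at hmono
  have hone : a + 1 - a = 1 := by ring
  rw [hone, div_one] at hmono
  linarith

lemma sum_fb_le (e : ℕ) : ∀ N : ℕ, 1 ≤ N →
    ∑ i ∈ Finset.Icc 1 N, fb e i / (i : ℝ) ≤ fb (e + 1) N := by
  intro N
  induction N with
  | zero => omega
  | succ N ihN =>
    intro _
    rcases Nat.eq_zero_or_pos N with rfl | hN
    · simp only [Finset.Icc_self, Finset.sum_singleton, Nat.cast_one, div_one]
      norm_num [fb_one]
    · rw [Finset.sum_Icc_succ_top (by omega)]
      have h1 := ihN hN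
      have h2 := fb_step e (a := (N : ℝ)) (by exact_mod_cast hN)
      push_cast
      push_cast at h2
      linarith

lemma H_le_fb : ∀ e N, H e N ≤ fb e N := by
  intro e
  induction e with
  | zero =>
    intro N
    show (1 : ℝ) ≤ _
    unfold fb
    simp
  | succ e ih =>
    intro N
    rcases Nat.eq_zero_or_pos N with rfl | hN
    · show ∑ i ∈ Finset.Icc 1 0, H e i / (i:ℝ) ≤ _
      simp only [show Finset.Icc 1 0 = ∅ from rfl, Finset.sum_empty]
      unfold fb
      refine Finset.sum_nonneg fun j _ => ?_
      rcases Nat.eq_zero_or_pos j with rfl | hj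
      · norm_num
      · simp [Real.log_zero, zero_pow (by omega : j ≠ 0)]
    · show ∑ i ∈ Finset.Icc 1 N, H e i / (i:ℝ) ≤ _
      calc ∑ i ∈ Finset.Icc 1 N, H e i / (i:ℝ) ≤ ∑ i ∈ Finset.Icc 1 N, fb e i / (i:ℝ) := by
            refine Finset.sum_le_sum fun i hi => ?_
            rw [Finset.mem_Icc] at hi
            have : (0:ℝ) < i := by exact_mod_cast hi.1
            exact div_le_div_of_nonneg_right (ih i) this.le
        _ ≤ fb (e + 1) N := sum_fb_le e N hN

end Ineq


section Meas
open MeasureTheory ProbabilityTheory Finset Real Set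

noncomputable def nu : Measure ℝ := volume.restrict (Icc 0 1)

instance : IsProbabilityMeasure nu := by
  constructor
  unfold nu
  rw [Measure.restrict_apply MeasurableSet.univ, Set.univ_inter, Real.volume_Icc]
  norm_num

lemma nu_moment (k : ℕ) : ∫ t, t ^ k ∂nu = 1 / ((k : ℝ) + 1) := by
  unfold nu
  rw [show ∫ t in Icc (0:ℝ) 1, t ^ k = ∫ t in Ioc (0:ℝ) 1, t ^ k from
    integral_Icc_eq_integral_Ioc]
  rw [← intervalIntegral.integral_of_le (by norm_num : (0:ℝ) ≤ 1)]
  rw [integral_pow]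
  norm_num

lemma cube_eq_pi (d : ℕ) :
    (volume : Measure (Fin d → ℝ)).restrict (Icc 0 1) = Measure.pi (fun _ : Fin d => nu) := by
  refine (Measure.pi_eq fun s hs => ?_).symm
  rw [Measure.restrict_apply (MeasurableSet.univ_pi hs)]
  have : Set.univ.pi s ∩ Icc (0 : Fin d → ℝ) 1 =
      Set.univ.pi (fun i => s i ∩ Icc 0 1) := by
    rw [← Set.pi_univ_Icc, ← Set.pi_inter_distrib]
    simp only [Pi.zero_apply, Pi.one_apply]
  rw [this, volume_pi_pi]
  refine Finset.prod_congr rfl fun i _ => ?_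
  unfold nu
  rw [Measure.restrict_apply (hs i)]

instance cube_prob (d : ℕ) :
    IsProbabilityMeasure ((volume : Measure (Fin d → ℝ)).restrict (Icc 0 1)) := by
  rw [cube_eq_pi]
  infer_instance

/-- Fubini for a product of one identical integrable function over `Measure.pi`. -/
lemma integral_pi_prod {β : Type*} [MeasurableSpace β] (ρ : Measure β) [SigmaFinite ρ]
    (g : β → ℝ) (hg : Integrable g ρ) :
    ∀ k : ℕ, ∫ x : Fin k → β, ∏ c, g (x c) ∂(Measure.pi fun _ => ρ) = (∫ t, g t ∂ρ) ^ k := by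
  intro k
  induction k with
  | zero =>
    simp only [Finset.univ_eq_empty, Finset.prod_empty, pow_zero]
    rw [integral_const]
    simp [Measure.pi_of_empty, measureReal_def]
  | succ k ih =>
    have hmp := (measurePreserving_piFinSuccAbove (fun _ : Fin (k + 1) => ρ) 0).symm
    rw [← hmp.integral_comp']
    have : ∀ z : β × (Fin k → β),
        (∏ c, g ((((MeasurableEquiv.piFinSuccAbove (fun _ => β) 0).symm) z) c)) =
          g z.1 * ∏ c, g (z.2 c) := by
      intro z
      rw [Fin.prod_univ_succ]
      simp [MeasurableEquiv.piFinSuccAbove_symm_apply, Fin.insertNthEquiv,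
        Fin.insertNth_zero, Fin.zero_succAbove]
    rw [MeasureTheory.integral_congr_ae (Filter.Eventually.of_forall this)]
    rw [MeasureTheory.integral_prod_mul (f := g) (g := fun y : Fin k → β => ∏ c, g (y c))]
    rw [ih, pow_succ]
    ring

lemma cube_moment (d k : ℕ) :
    ∫ x in Icc (0 : Fin d → ℝ) 1, ∏ c, (x c) ^ k = (1 / ((k : ℝ) + 1)) ^ d := by
  rw [show (∫ x in Icc (0 : Fin d → ℝ) 1, ∏ c, (x c) ^ k) =
      ∫ x, ∏ c, (x c) ^ k ∂((volume : Measure (Fin d → ℝ)).restrict (Icc 0 1)) from rfl]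
  rw [cube_eq_pi]
  have hInt : Integrable (fun t : ℝ => t ^ k) nu := by
    unfold nu
    exact (continuous_pow k).integrableOn_Icc
  rw [integral_pi_prod nu (fun t => t ^ k) hInt d, nu_moment]

/-- Peeling the first coordinate of a product measure for a "common constraint" set. -/
lemma pi_measure_forall_pair {β : Type*} [MeasurableSpace β] (ρ : Measure β)
    [IsProbabilityMeasure ρ] (k : ℕ) {R : Set (β × β)} (hR : MeasurableSet R) :
    (Measure.pi fun _ : Fin (k + 1) => ρ) {y | ∀ a : Fin k, (y 0, y a.succ) ∈ R} =
      ∫⁻ x, (ρ {z | (x, z) ∈ R}) ^ k ∂ρ := by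
  set e := MeasurableEquiv.piFinSuccAbove (fun _ : Fin (k + 1) => β) 0 with he
  have hmp := measurePreserving_piFinSuccAbove (fun _ : Fin (k + 1) => ρ) 0
  set T : Set (β × (Fin k → β)) := {p | ∀ a : Fin k, (p.1, p.2 a) ∈ R} with hT
  have hTmeas : MeasurableSet T := by
    have : T = ⋂ a : Fin k, (fun p : β × (Fin k → β) => (p.1, p.2 a)) ⁻¹' R := by
      ext p; simp [hT]
    rw [this]
    exact MeasurableSet.iInter fun a =>
      (measurable_fst.prodMk ((measurable_pi_apply a).comp measurable_snd)) hR
  have hset : {y : Fin (k + 1) → β | ∀ a : Fin k, (y 0, y a.succ) ∈ R} = e ⁻¹' T := by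
    ext y
    simp only [Set.mem_setOf_eq, Set.mem_preimage, he, hT,
      MeasurableEquiv.piFinSuccAbove_apply]
    constructor
    · intro h a; simpa [Fin.zero_succAbove, Fin.tail] using h a
    · intro h a; simpa [Fin.zero_succAbove, Fin.tail] using h a
  rw [hset, hmp.measure_preimage hTmeas.nullMeasurableSet]
  rw [Measure.prod_apply hTmeas]
  refine lintegral_congr fun x => ?_
  have : (Prod.mk x ⁻¹' T) = Set.univ.pi (fun _ : Fin k => {z | (x, z) ∈ R}) := by
    ext y; simp [hT]
  rw [this, Measure.pi_pi]
  simp [Finset.prod_const]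

lemma prod_coord_le_one {d : ℕ} {x : Fin d → ℝ} (hx : x ∈ Icc (0 : Fin d → ℝ) 1) :
    (0 ≤ ∏ c, x c) ∧ (∏ c, x c ≤ 1) := by
  obtain ⟨h0, h1⟩ := hx
  constructor
  · exact Finset.prod_nonneg fun c _ => h0 c
  · exact Finset.prod_le_one (fun c _ => h0 c) (fun c _ => h1 c)

lemma cube_Iic_inter {d : ℕ} {x : Fin d → ℝ} (hx : x ∈ Icc (0 : Fin d → ℝ) 1) :
    Iic x ∩ Icc (0 : Fin d → ℝ) 1 = Icc 0 x := by
  obtain ⟨h0, h1⟩ := hx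
  ext z
  simp only [Set.mem_inter_iff, Set.mem_Iic, Set.mem_Icc]
  constructor
  · rintro ⟨hzx, hz0, _⟩; exact ⟨hz0, hzx⟩
  · rintro ⟨hz0, hzx⟩; exact ⟨hzx, hz0, le_trans hzx h1⟩

lemma cube_measure_Iic {d : ℕ} {x : Fin d → ℝ} (hx : x ∈ Icc (0 : Fin d → ℝ) 1) :
    (volume : Measure (Fin d → ℝ)).restrict (Icc 0 1) (Iic x) = ENNReal.ofReal (∏ c, x c) := by
  rw [Measure.restrict_apply measurableSet_Iic, cube_Iic_inter hx, volume_Icc_pi]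
  simp only [Pi.zero_apply, sub_zero]
  exact (ENNReal.ofReal_prod_of_nonneg (fun c _ => hx.1 c)).symm

/-- The key real value. -/
noncomputable def realq (d m : ℕ) : ℝ :=
  ∑ k ∈ range (m + 1), (-1 : ℝ) ^ k * (m.choose k) / ((k : ℝ) + 1) ^ d

lemma continuous_one_sub_prod_pow (d m : ℕ) :
    Continuous (fun x : Fin d → ℝ => (1 - ∏ c, x c) ^ m) :=
  ((continuous_const.sub (continuous_finset_prod univ fun c _ => continuous_apply c)).pow m)

lemma integrable_one_sub_prod_pow (d m : ℕ) :
    Integrable (fun x : Fin d → ℝ => (1 - ∏ c, x c) ^ m)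
      ((volume : Measure (Fin d → ℝ)).restrict (Icc 0 1)) :=
  (continuous_one_sub_prod_pow d m).continuousOn.integrableOn_compact isCompact_Icc

lemma cube_integral_eval (d m : ℕ) :
    ∫ x in Icc (0 : Fin d → ℝ) 1, (1 - ∏ c, x c) ^ m = realq d m := by
  have expand : ∀ x : Fin d → ℝ, (1 - ∏ c, x c) ^ m =
      ∑ k ∈ range (m + 1), (-1 : ℝ) ^ k * (m.choose k) * ∏ c, (x c) ^ k := by
    intro x
    have := add_pow (-(∏ c, x c)) 1 m
    rw [show -(∏ c, x c) + 1 = 1 - ∏ c, x c by ring] at this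
    rw [this]
    refine Finset.sum_congr rfl fun k _ => ?_
    rw [neg_pow, one_pow, ← Finset.prod_pow]
    ring
  rw [MeasureTheory.integral_congr_ae (Filter.Eventually.of_forall expand)]
  rw [MeasureTheory.integral_finset_sum _ (fun k _ => ?_)]
  · unfold realq
    refine Finset.sum_congr rfl fun k _ => ?_
    rw [MeasureTheory.integral_const_mul, cube_moment, div_pow, one_pow]
    ring
  · exact ((continuous_const.mul (continuous_finset_prod univ fun c _ =>
      (continuous_apply c).pow k)).continuousOn.integrableOn_compact isCompact_Icc)

lemma realq_nonneg (d m : ℕ) : 0 ≤ realq d m := by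
  rw [← cube_integral_eval]
  refine MeasureTheory.integral_nonneg_of_ae ?_
  filter_upwards [ae_restrict_mem measurableSet_Icc] with x hx
  have := prod_coord_le_one hx
  have h1 : (0:ℝ) ≤ 1 - ∏ c, x c := by linarith [this.2]
  positivity

lemma realq_le_one (d m : ℕ) : realq d m ≤ 1 := by
  rw [← cube_integral_eval]
  have h1 : ∫ _x in Icc (0 : Fin d → ℝ) 1, (1:ℝ) = 1 := by
    rw [integral_const]
    simp [measure_univ (μ := (volume : Measure (Fin d → ℝ)).restrict (Icc 0 1))]
  have hmono : (∫ x in Icc (0 : Fin d → ℝ) 1, (1 - ∏ c, x c) ^ m) ≤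
      ∫ _x in Icc (0 : Fin d → ℝ) 1, (1:ℝ) := by
    refine MeasureTheory.integral_mono_ae (integrable_one_sub_prod_pow d m)
      (integrable_const 1) ?_
    filter_upwards [ae_restrict_mem measurableSet_Icc] with x hx
    have hp := prod_coord_le_one hx
    have h2 : (0:ℝ) ≤ 1 - ∏ c, x c := by linarith [hp.2]
    have h3 : 1 - ∏ c, x c ≤ 1 := by linarith [hp.1]
    exact pow_le_one₀ h2 h3
  linarith [hmono, le_of_eq h1.symm, le_of_eq h1]

/-- The central probability computation. -/
lemma key_prob (d m : ℕ) :
    (Measure.pi fun _ : Fin (m + 1) => (volume : Measure (Fin d → ℝ)).restrict (Icc 0 1))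
      {y | ∀ a : Fin m, ∃ c, y 0 c < y a.succ c} = ENNReal.ofReal (realq d m) := by
  set μd := (volume : Measure (Fin d → ℝ)).restrict (Icc 0 1) with hμd
  have hR : MeasurableSet {p : (Fin d → ℝ) × (Fin d → ℝ) | ∃ c, p.1 c < p.2 c} := by
    rw [show {p : (Fin d → ℝ) × (Fin d → ℝ) | ∃ c, p.1 c < p.2 c} =
      ⋃ c, {p : (Fin d → ℝ) × (Fin d → ℝ) | p.1 c < p.2 c} by ext p; simp]
    exact MeasurableSet.iUnion fun c => measurableSet_lt
      (measurable_fst.eval) (measurable_snd.eval)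
  have h1 := pi_measure_forall_pair μd m hR
  rw [show {y : Fin (m+1) → Fin d → ℝ | ∀ a : Fin m, ∃ c, y 0 c < y a.succ c} =
    {y | ∀ a : Fin m, (y 0, y a.succ) ∈
      {p : (Fin d → ℝ) × (Fin d → ℝ) | ∃ c, p.1 c < p.2 c}} from rfl, h1]
  have h2 : ∀ᵐ x ∂μd, (μd {z | (x, z) ∈
      {p : (Fin d → ℝ) × (Fin d → ℝ) | ∃ c, p.1 c < p.2 c}}) ^ m =
      ENNReal.ofReal ((1 - ∏ c, x c) ^ m) := by
    filter_upwards [ae_restrict_mem measurableSet_Icc] with x hx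
    have hset : {z : Fin d → ℝ | ∃ c, x c < z c} = (Iic x)ᶜ := by
      ext z
      simp only [Set.mem_setOf_eq, Set.mem_compl_iff, Set.mem_Iic, Pi.le_def, not_forall, not_le]
    rw [hset, measure_compl measurableSet_Iic (measure_ne_top _ _)]
    have hprob : μd Set.univ = 1 := measure_univ
    rw [hprob, hμd, cube_measure_Iic hx]
    have hp := prod_coord_le_one hx
    rw [← ENNReal.ofReal_one, ← ENNReal.ofReal_sub 1 hp.1, ENNReal.ofReal_pow (by linarith [hp.2])]
  rw [lintegral_congr_ae h2]
  rw [← MeasureTheory.ofReal_integral_eq_lintegral_ofReal (integrable_one_sub_prod_pow d m) ?_]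
  · rw [cube_integral_eval]
  · filter_upwards [ae_restrict_mem measurableSet_Icc] with x hx
    have hp := prod_coord_le_one hx
    have : (0:ℝ) ≤ 1 - ∏ c, x c := by linarith [hp.2]
    positivity

lemma dominates_or_eq_iff {d : ℕ} (u v : Fin d → ℝ) :
    (dominates u v ∨ u = v) ↔ ∀ c, u c ≤ v c := by
  constructor
  · rintro (⟨h, _⟩ | rfl)
    · exact h
    · exact fun c => le_rfl
  · intro h
    by_cases hstrict : ∃ j, u j < v j
    · exact Or.inl ⟨h, hstrict⟩
    · push_neg at hstrict
      exact Or.inr (funext fun c => le_antisymm (h c) (hstrict c))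

section Indep

variable {Ω : Type*} [MeasureSpace Ω] [IsProbabilityMeasure (ℙ : Measure Ω)]
  {d n : ℕ} (X : Fin n → Ω → (Fin d → ℝ))

lemma map_tuple_pi (hmeas : ∀ i, Measurable (X i))
    (hindep : iIndepFun X ℙ)
    {k : ℕ} (g : Fin k → Fin n) (hg : Function.Injective g) :
    Measure.map (fun ω a => X (g a) ω) ℙ =
      Measure.pi (fun a => Measure.map (X (g a)) ℙ) := by
  have hΦ : Measurable (fun ω a => X (g a) ω) :=
    measurable_pi_lambda _ fun a => hmeas (g a)
  refine (Measure.pi_eq fun s hs => ?_).symm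
  rw [Measure.map_apply hΦ (MeasurableSet.univ_pi hs)]
  have hpre : (fun ω a => X (g a) ω) ⁻¹' (Set.univ.pi s) = ⋂ a, X (g a) ⁻¹' s a := by
    ext ω; simp [Set.mem_pi]
  classical
  set sets : Fin n → Set (Fin d → ℝ) := Function.extend g s (fun _ => Set.univ) with hsets
  have hext : ∀ a, sets (g a) = s a := fun a => hg.extend_apply _ _ a
  have h2 : (⋂ a, X (g a) ⁻¹' s a) = ⋂ j ∈ Finset.image g Finset.univ, X j ⁻¹' sets j := by
    ext ω
    simp only [Set.mem_iInter]
    constructor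
    · intro h j hj
      rw [Finset.mem_image] at hj
      obtain ⟨a, -, rfl⟩ := hj
      rw [hext]
      exact h a
    · intro h a
      have := h (g a) (Finset.mem_image.2 ⟨a, Finset.mem_univ a, rfl⟩)
      rwa [hext] at this
  rw [hpre, h2, hindep.measure_inter_preimage_eq_mul _ (fun j hj => ?_)]
  · rw [Finset.prod_image (fun a _ b _ hab => hg hab)]
    refine Finset.prod_congr rfl fun a _ => ?_
    rw [hext, Measure.map_apply (hmeas (g a)) (hs a)]
  · rw [Finset.mem_image] at hj
    obtain ⟨a, -, rfl⟩ := hj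
    rw [hext]
    exact hs a

lemma prob_notdom (hmeas : ∀ i, Measurable (X i))
    (hindep : iIndepFun X ℙ)
    (hlaw : ∀ i, Measure.map (X i) ℙ = volume.restrict (Set.Icc (0 : Fin d → ℝ) 1))
    {m : ℕ} {s : Finset (Fin n)} (hs : s.card = m) {i : Fin n} (hi : i ∉ s) :
    ℙ {ω | ∀ j ∈ s, ∃ c, X i ω c < X j ω c} = ENNReal.ofReal (realq d m) := by
  classical
  set g : Fin (m + 1) → Fin n := Fin.cons i (fun a => (s.orderIsoOfFin hs a : Fin n)) with hgdef
  have hg0 : g 0 = i := rfl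
  have hgsucc : ∀ a : Fin m, g a.succ = (s.orderIsoOfFin hs a : Fin n) := fun a => by
    simp [hgdef]
  have hgmem : ∀ a : Fin m, g a.succ ∈ s := fun a => by
    rw [hgsucc]; exact (s.orderIsoOfFin hs a).2
  have hg : Function.Injective g := by
    intro a b hab
    induction a using Fin.cases with
    | zero =>
      induction b using Fin.cases with
      | zero => rfl
      | succ b => rw [hg0, hgsucc] at hab; exact absurd (hab ▸ (s.orderIsoOfFin hs b).2) hi
    | succ a =>
      induction b using Fin.cases with
      | zero => rw [hg0, hgsucc] at hab; exact absurd (hab ▸ (s.orderIsoOfFin hs a).2) hi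
      | succ b =>
        rw [hgsucc, hgsucc] at hab
        have := (s.orderIsoOfFin hs).injective (Subtype.ext hab)
        rw [this]
  set S : Set (Fin (m + 1) → Fin d → ℝ) := {y | ∀ a : Fin m, ∃ c, y 0 c < y a.succ c} with hSdef
  have hSmeas : MeasurableSet S := by
    rw [show S = ⋂ a : Fin m, ⋃ c : Fin d,
        {y : Fin (m + 1) → Fin d → ℝ | y 0 c < y a.succ c} by ext y; simp [hSdef]]
    exact MeasurableSet.iInter fun a => MeasurableSet.iUnion fun c =>
      measurableSet_lt ((measurable_pi_apply 0).eval) ((measurable_pi_apply a.succ).eval)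
  have hset : {ω | ∀ j ∈ s, ∃ c, X i ω c < X j ω c} = (fun ω a => X (g a) ω) ⁻¹' S := by
    ext ω
    simp only [Set.mem_setOf_eq, Set.mem_preimage, hSdef]
    constructor
    · intro h a
      simpa only [hg0, hgsucc] using h _ (hgmem a)
    · intro h j hj
      obtain ⟨a, ha⟩ : ∃ a : Fin m, (s.orderIsoOfFin hs a : Fin n) = j :=
        ⟨(s.orderIsoOfFin hs).symm ⟨j, hj⟩, by simp⟩
      simpa only [hg0, hgsucc, ha] using h a
  rw [hset, ← Measure.map_apply (measurable_pi_lambda _ fun a => hmeas (g a)) hSmeas]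
  rw [map_tuple_pi X hmeas hindep g hg]
  have hlaws : (fun a : Fin (m + 1) => Measure.map (X (g a)) ℙ) =
      fun _ => (volume : Measure (Fin d → ℝ)).restrict (Icc 0 1) := by
    funext a; exact hlaw (g a)
  rw [hlaws]
  exact key_prob d m

end Indep

lemma dnCount_cast {d n : ℕ} (X' : Fin n → Fin d → ℝ) (s : Finset (Fin n)) :
    (dnCount X' s : ℝ) = ∑ i : Fin n, if (∃ j ∈ s, ∀ c, X' j c ≤ X' i c) then (1:ℝ) else 0 := by
  classical
  have he : ∀ i : Fin n, (∃ j ∈ s, dominates (X' j) (X' i) ∨ X' j = X' i) ↔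
      (∃ j ∈ s, ∀ c, X' j c ≤ X' i c) := by
    intro i
    constructor
    · rintro ⟨j, hj, h⟩; exact ⟨j, hj, (dominates_or_eq_iff _ _).1 h⟩
    · rintro ⟨j, hj, h⟩; exact ⟨j, hj, (dominates_or_eq_iff _ _).2 h⟩
  unfold dnCount
  rw [Nat.card_eq_fintype_card, Fintype.card_subtype, Finset.card_filter]
  push_cast
  refine Finset.sum_congr rfl fun i _ => ?_
  simp only [he i, Finset.mem_univ, if_true]

section Indep2

variable {Ω : Type*} [MeasureSpace Ω] [IsProbabilityMeasure (ℙ : Measure Ω)]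
  {d n m : ℕ} (X : Fin n → Ω → (Fin d → ℝ))

lemma integral_err (hd : 1 ≤ d) (hn : 1 ≤ n) (hmn : m ≤ n)
    (hmeas : ∀ i, Measurable (X i))
    (hindep : iIndepFun X ℙ)
    (hlaw : ∀ i, Measure.map (X i) ℙ = volume.restrict (Set.Icc (0 : Fin d → ℝ) 1))
    {s : Finset (Fin n)} (hs : s.card = m) :
    ∫ ω, ((n : ℝ) - (dnCount (fun i => X i ω) s : ℝ)) / n ∂ℙ =
      (((n : ℝ) - m) / (n * (m + 1))) * H (d - 1) (m + 1) := by
  classical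
  set E : Fin n → Set Ω := fun i => {ω | ∃ j ∈ s, ∀ c, X j ω c ≤ X i ω c} with hE
  have hEmeas : ∀ i, MeasurableSet (E i) := by
    intro i
    have : E i = ⋃ j ∈ (s : Set (Fin n)), ⋂ c, {ω | X j ω c ≤ X i ω c} := by
      ext ω; simp [hE]
    rw [this]
    exact MeasurableSet.biUnion s.countable_toSet fun j _ =>
      MeasurableSet.iInter fun c => measurableSet_le ((hmeas j).eval) ((hmeas i).eval)
  have hpt : ∀ ω, (dnCount (fun i => X i ω) s : ℝ) =
      ∑ i, (E i).indicator (fun _ => (1:ℝ)) ω := by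
    intro ω
    rw [dnCount_cast]
    refine Finset.sum_congr rfl fun i _ => ?_
    by_cases h : ∃ j ∈ s, ∀ c, X j ω c ≤ X i ω c
    · rw [if_pos h]
      exact (Set.indicator_of_mem (show ω ∈ E i from h) (fun _ => (1:ℝ))).symm
    · rw [if_neg h]
      exact (Set.indicator_of_notMem (show ω ∉ E i from h) (fun _ => (1:ℝ))).symm
  have hIntInd : ∀ i : Fin n, Integrable ((E i).indicator (fun _ => (1:ℝ))) ℙ :=
    fun i => (integrable_const (1:ℝ)).indicator (hEmeas i)
  have hIntSum : Integrable (fun ω => ∑ i, (E i).indicator (fun _ => (1:ℝ)) ω) ℙ :=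
    integrable_finset_sum _ fun i _ => hIntInd i
  have hcongr : (fun ω => ((n : ℝ) - (dnCount (fun i => X i ω) s : ℝ)) / n) =
      fun ω => ((n : ℝ) - ∑ i, (E i).indicator (fun _ => (1:ℝ)) ω) / n := by
    funext ω; rw [hpt ω]
  rw [hcongr, integral_div, integral_sub (integrable_const _) hIntSum, integral_const]
  rw [integral_finset_sum _ fun i _ => hIntInd i]
  have hval : ∀ i : Fin n, ∫ ω, (E i).indicator (fun _ => (1:ℝ)) ω ∂ℙ = (ℙ (E i)).toReal := by
    intro i
    rw [integral_indicator_const (1:ℝ) (hEmeas i)]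
    simp [measureReal_def]
  rw [Finset.sum_congr rfl fun i _ => hval i]
  have hsum : ∑ i : Fin n, (ℙ (E i)).toReal =
      (m : ℝ) + ((n : ℝ) - m) * (1 - realq d m) := by
    rw [← Finset.sum_sdiff (Finset.subset_univ s)]
    have hin : ∀ i ∈ s, (ℙ (E i)).toReal = 1 := by
      intro i hi
      have : E i = Set.univ := by
        ext ω
        simp only [Set.mem_univ, iff_true, hE, Set.mem_setOf_eq]
        exact ⟨i, hi, fun c => le_rfl⟩
      rw [this]
      simp
    have hout : ∀ i ∈ Finset.univ \ s, (ℙ (E i)).toReal = 1 - realq d m := by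
      intro i hi
      rw [Finset.mem_sdiff] at hi
      have hi' : i ∉ s := hi.2
      have hcompl : (E i)ᶜ = {ω | ∀ j ∈ s, ∃ c, X i ω c < X j ω c} := by
        ext ω
        simp only [Set.mem_compl_iff, hE, Set.mem_setOf_eq]
        push_neg
        tauto
      have hprob := prob_notdom X hmeas hindep hlaw hs hi'
      rw [← hcompl] at hprob
      have hmc : ℙ ((E i)ᶜ) = 1 - ℙ (E i) := by
        rw [measure_compl (hEmeas i) (measure_ne_top _ _)]
        simp
      rw [hmc] at hprob
      have hEle : ℙ (E i) ≤ 1 := prob_le_one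
      have hEeq : ℙ (E i) = 1 - ENNReal.ofReal (realq d m) := by
        rw [← hprob, ENNReal.sub_sub_cancel ENNReal.one_ne_top hEle]
      rw [hEeq, ENNReal.toReal_sub_of_le ?_ ENNReal.one_ne_top]
      · rw [ENNReal.toReal_one, ENNReal.toReal_ofReal (realq_nonneg d m)]
      · exact ENNReal.ofReal_le_one.2 (realq_le_one d m)
    rw [Finset.sum_congr rfl hout, Finset.sum_congr rfl hin]
    rw [Finset.sum_const, Finset.sum_const, Finset.card_sdiff_of_subset (Finset.subset_univ s)]
    rw [Finset.card_univ, Fintype.card_fin, hs]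
    have : ((n - m : ℕ) : ℝ) = (n : ℝ) - m := by
      rw [Nat.cast_sub hmn]
    simp only [nsmul_eq_mul, this, smul_eq_mul, mul_one]
    ring
  rw [hsum]
  have hq := sum_alt_eq_H (m := m) hd
  have hrq : realq d m = H (d - 1) (m + 1) / ((m : ℝ) + 1) := by
    rw [← hq]; rfl
  rw [hrq]
  have hn0 : (n : ℝ) ≠ 0 := Nat.cast_ne_zero.2 (by omega)
  have hm1 : (m : ℝ) + 1 ≠ 0 := by positivity
  simp only [measure_univ, probReal_univ, ENNReal.toReal_one, smul_eq_mul, one_mul]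
  field_simp
  ring

end Indep2

end Meas


/-- Under component independence (modelled by i.i.d. uniform points on `[0,1]^d`),
the expected error of the sampling-based skyline algorithm with sample size `m`
equals `((n-m)/(n(m+1))) H_{d-1,m+1}`, which is at most
`((n-m)/(n(m+1))) Σ_{i=0}^{d-1} (log(m+1))^i / i!`. -/
theorem expected_error_CI
    {Ω : Type*} [MeasureSpace Ω] [IsProbabilityMeasure (ℙ : Measure Ω)]
    {d n m : ℕ} (hd : 1 ≤ d) (hmn : m ≤ n) (X : Fin n → Ω → (Fin d → ℝ))
    (hmeas : ∀ i, Measurable (X i))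
    (hindep : iIndepFun X ℙ)
    (hlaw : ∀ i, Measure.map (X i) ℙ = volume.restrict (Set.Icc (0 : Fin d → ℝ) 1)) :
    ((Finset.powersetCard m (Finset.univ : Finset (Fin n))).card : ℝ)⁻¹ *
        ∑ s ∈ Finset.powersetCard m (Finset.univ : Finset (Fin n)),
          ∫ ω, ((n : ℝ) - (dnCount (fun i => X i ω) s : ℝ)) / n ∂ℙ =
      (((n : ℝ) - m) / (n * (m + 1))) * H (d - 1) (m + 1) ∧
    (((n : ℝ) - m) / (n * (m + 1))) * H (d - 1) (m + 1) ≤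
      (((n : ℝ) - m) / (n * (m + 1))) *
        ∑ i ∈ Finset.range d, (Real.log (m + 1)) ^ i / (Nat.factorial i) := by
  classical
  constructor
  · rcases Nat.eq_zero_or_pos n with rfl | hn
    · have hm0 : m = 0 := by omega
      subst hm0
      simp
    · have hcongr : ∀ s ∈ Finset.powersetCard m (Finset.univ : Finset (Fin n)),
          (∫ ω, ((n : ℝ) - (dnCount (fun i => X i ω) s : ℝ)) / n ∂ℙ) =
            (((n : ℝ) - m) / (n * (m + 1))) * H (d - 1) (m + 1) := by
        intro s hsmem
        exact integral_err X hd hn hmn hmeas hindep hlaw (Finset.mem_powersetCard.1 hsmem).2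
      rw [Finset.sum_congr rfl hcongr, Finset.sum_const, Finset.card_powersetCard,
        Finset.card_univ, Fintype.card_fin]
      have hC : ((n.choose m : ℕ) : ℝ) ≠ 0 := Nat.cast_ne_zero.2 (Nat.choose_pos hmn).ne'
      rw [nsmul_eq_mul, ← mul_assoc, inv_mul_cancel₀ hC, one_mul]
  · have hfac : 0 ≤ ((n : ℝ) - m) / (n * (m + 1)) := by
      apply div_nonneg
      · have : (m : ℝ) ≤ n := Nat.cast_le.2 hmn
        linarith
      · positivity
    refine mul_le_mul_of_nonneg_left ?_ hfac
    have hb := H_le_fb (d - 1) (m + 1)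
    unfold fb at hb
    rw [show d - 1 + 1 = d from by omega] at hb
    push_cast at hb
    exact hb
end

section
/- In the verification step of the DOUBLE algorithm: if the true error ε_j of the current approximate skyline exceeds ε, and the verification sample size s_v satisfies s_v ≥ 18(ln log₂ n + ln(1/δ))/ε, then the probability that the empirical error estimate ε̂_j (fraction of s_v i.i.d. verification tuples not dominated by the approximate skyline) is at most (2/3)ε is less than δ/log₂ n. -/
open MeasureTheory ProbabilityTheory

/-- Verification step of DOUBLE: if the true error `εⱼ` of the current approximate
skyline exceeds the bound `ε`, and the verification sample size satisfies
`s_v ≥ 18(ln log₂ n + ln(1/δ))/ε`, then the probability that the empirical error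
estimate (fraction of the `s_v` i.i.d. Bernoulli(εⱼ) verification indicators equal
to 1) is at most `(2/3)ε` is less than `δ/log₂ n`. -/
theorem double_verification_error
    {Ω : Type*} [MeasureSpace Ω] [IsProbabilityMeasure (ℙ : Measure Ω)]
    {sv n : ℕ} {ε εj δ : ℝ} (hn : 2 ≤ n) (hδ0 : 0 < δ) (hδ1 : δ < 1)
    (hε0 : 0 < ε) (hεj : ε < εj)
    (hsv : 18 * (Real.log (Real.logb 2 n) + Real.log (1 / δ)) / ε ≤ (sv : ℝ))
    (X : Fin sv → Ω → ℝ)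
    (hmeas : ∀ i, Measurable (X i))
    (hindep : iIndepFun X ℙ)
    (h01 : ∀ i ω, X i ω = 0 ∨ X i ω = 1)
    (hmean : ∀ i, (ℙ {ω | X i ω = 1}).toReal = εj) :
    (ℙ {ω | (1 / (sv : ℝ)) * ∑ i, X i ω ≤ (2 / 3) * ε}).toReal <
      δ / Real.logb 2 n := by
  set t : ℝ := Real.log (2/3) with htdef
  have ht_neg : t < 0 := Real.log_neg (by norm_num) (by norm_num)
  have hexp_t : Real.exp t = 2/3 := Real.exp_log (by norm_num)
  -- logb 2 n ≥ 1
  have hlogb : 1 ≤ Real.logb 2 n := by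
    rw [Real.logb, one_le_div (Real.log_pos one_lt_two)]
    exact Real.log_le_log (by norm_num) (by exact_mod_cast hn)
  have hlogbpos : 0 < Real.logb 2 n := lt_of_lt_of_le one_pos hlogb
  have hlogδ : 0 < Real.log (1/δ) := Real.log_pos (by rw [lt_div_iff₀ hδ0]; linarith)
  have hlogn : 0 ≤ Real.log (Real.logb 2 n) := Real.log_nonneg hlogb
  -- sv is positive
  have hsvpos : 0 < (sv : ℝ) := by
    refine lt_of_lt_of_le ?_ hsv
    apply div_pos _ hε0
    linarith
  have hsvnat : 0 < sv := by exact_mod_cast hsvpos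
  -- εⱼ bounds
  have hεj0 : 0 < εj := lt_trans hε0 hεj
  have hεj1 : εj ≤ 1 := by
    have i0 : Fin sv := ⟨0, hsvnat⟩
    rw [← hmean i0]
    calc (ℙ {ω | X i0 ω = 1}).toReal ≤ (1 : ENNReal).toReal :=
          ENNReal.toReal_mono (by norm_num) prob_le_one
      _ = 1 := by norm_num
  -- rewrite the event
  have hset : {ω | (1 / (sv : ℝ)) * ∑ i, X i ω ≤ (2/3) * ε}
      = {ω | (∑ i, X i) ω ≤ 2/3 * ε * sv} := by
    ext ω
    simp only [Set.mem_setOf_eq, Finset.sum_apply]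
    rw [one_div, inv_mul_le_iff₀ hsvpos]
    constructor <;> intro h <;> linarith
  -- measurability and integrability
  have hS_meas : Measurable (∑ i, X i) := by
    rw [Finset.sum_fn]
    exact Finset.measurable_sum _ (fun i _ => hmeas i)
  have hS_nonneg : ∀ ω, 0 ≤ (∑ i, X i) ω := by
    intro ω
    rw [Finset.sum_apply]
    refine Finset.sum_nonneg fun i _ => ?_
    rcases h01 i ω with h | h <;> rw [h] <;> norm_num
  have h_int : Integrable (fun ω => Real.exp (t * (∑ i, X i) ω)) ℙ := by
    refine Integrable.mono' (integrable_const 1)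
      ((hS_meas.const_mul t).exp.aestronglyMeasurable) ?_
    filter_upwards with ω
    rw [Real.norm_eq_abs, abs_of_nonneg (Real.exp_pos _).le]
    calc Real.exp (t * (∑ i, X i) ω) ≤ Real.exp 0 :=
          Real.exp_le_exp.mpr (mul_nonpos_of_nonpos_of_nonneg ht_neg.le (hS_nonneg ω))
      _ = 1 := Real.exp_zero
  -- mgf of each Bernoulli
  have hmgf : ∀ i, mgf (X i) ℙ t = 1 - εj/3 := by
    intro i
    have hsmeas : MeasurableSet {ω | X i ω = 1} := by
      have h : {ω | X i ω = 1} = X i ⁻¹' {1} := by ext ω; simp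
      rw [h]; exact hmeas i (measurableSet_singleton 1)
    have hfun : (fun ω => Real.exp (t * X i ω))
        = fun ω => 1 + Set.indicator {ω | X i ω = 1} (fun _ => Real.exp t - 1) ω := by
      funext ω
      rcases h01 i ω with h | h
      · simp [Set.indicator_apply, Set.mem_setOf_eq, h]
      · simp only [Set.indicator_apply, Set.mem_setOf_eq, h, if_true, mul_one]
        ring
    rw [mgf]
    rw [hfun, integral_add (integrable_const 1) ((integrable_const _).indicator hsmeas),
      integral_const, integral_indicator_const _ hsmeas, measureReal_def ℙ {ω | X i ω = 1}, hmean i]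
    simp [hexp_t]
    ring
  -- mgf of the sum
  have hmgf_sum : mgf (∑ i, X i) ℙ t = (1 - εj/3) ^ sv := by
    rw [hindep.mgf_sum hmeas]
    rw [Finset.prod_congr rfl fun i _ => hmgf i, Finset.prod_const, Finset.card_univ,
      Fintype.card_fin]
  -- Chernoff bound
  have hch := measure_le_le_exp_mul_mgf (X := ∑ i, X i) (μ := ℙ) (2/3 * ε * sv) ht_neg.le h_int
  rw [hmgf_sum] at hch
  -- bound the mgf power by an exponential
  have hbase : 0 ≤ 1 - εj/3 := by linarith
  have hpow : (1 - εj/3) ^ sv ≤ Real.exp (-(εj/3)) ^ sv := by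
    apply pow_le_pow_left₀ hbase
    linarith [Real.add_one_le_exp (-(εj/3))]
  -- the numeric bound log (3/2) ≤ 5/12
  have ht512 : -t ≤ 5/12 := by
    have h32 : -t = Real.log (3/2) := by
      rw [htdef, ← Real.log_inv]; norm_num
    rw [h32, Real.log_le_iff_le_exp (by norm_num)]
    have hE : ((3:ℝ)/2) ^ (12:ℕ) ≤ Real.exp 5 := by
      calc ((3:ℝ)/2) ^ (12:ℕ) ≤ (2.7182818283 : ℝ) ^ (5:ℕ) := by norm_num
        _ ≤ Real.exp 1 ^ (5:ℕ) := pow_le_pow_left₀ (by norm_num) Real.exp_one_gt_d9.le 5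
        _ = Real.exp 5 := by rw [← Real.exp_nat_mul]; norm_num
    have h12 : ((3:ℝ)/2) ^ (12:ℕ) ≤ Real.exp (5/12) ^ (12:ℕ) := by
      rw [← Real.exp_nat_mul]
      norm_num at hE ⊢
      linarith
    exact le_of_pow_le_pow_left₀ (by norm_num) (Real.exp_pos _).le h12
  -- the key exponent inequality
  have hsv' : 18 * (Real.log (Real.logb 2 n) + Real.log (1/δ)) ≤ (sv : ℝ) * ε := by
    rw [div_le_iff₀ hε0] at hsv
    linarith
  have hlog1δ : Real.log (1/δ) = -Real.log δ := by rw [one_div, Real.log_inv]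
  have hexpineq : -t * (2/3 * ε * sv) + (sv : ℝ) * -(εj/3) <
      Real.log (δ / Real.logb 2 n) := by
    rw [Real.log_div (ne_of_gt hδ0) (ne_of_gt hlogbpos)]
    rw [hlog1δ] at hsv'
    have h1 : (0:ℝ) < (sv : ℝ) * (εj - ε) := mul_pos hsvpos (by linarith)
    have h2 : (0:ℝ) ≤ (5/12 - (-t)) * (ε * sv) :=
      mul_nonneg (by linarith) (mul_nonneg hε0.le hsvpos.le)
    nlinarith [hsv', h1, h2]
  -- conclude
  rw [hset]
  calc (ℙ {ω | (∑ i, X i) ω ≤ 2/3 * ε * sv}).toReal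
      ≤ Real.exp (-t * (2/3 * ε * sv)) * (1 - εj/3) ^ sv := hch
    _ ≤ Real.exp (-t * (2/3 * ε * sv)) * Real.exp (-(εj/3)) ^ sv :=
        mul_le_mul_of_nonneg_left hpow (Real.exp_pos _).le
    _ = Real.exp (-t * (2/3 * ε * sv) + (sv : ℝ) * -(εj/3)) := by
        rw [← Real.exp_nat_mul, ← Real.exp_add]
    _ < δ / Real.logb 2 n := by
        rw [← Real.exp_log (div_pos hδ0 hlogbpos)]
        exact Real.exp_lt_exp.mpr hexpineq
end
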